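/- Let (X, ↪, P) be a primal-proximity space and A, B, H ⊆ X with A ⊆ B. If A ↪ B and {b} ↪ H for every b ∈ B, then A ↪ H. -/
import Mathlib


open Set

/-- A collection `P` of subsets of `X` is a *primal* on `X`. -/
def IsPrimalOn {X : Type*} (P : Set (Set X)) : Prop :=
  (Set.univ : Set X) ∉ P ∧
  (∀ A B : Set X, A ∈ P → B ⊆ A → B ∈ P) ∧
  (∀ A B : Set X, A ∩ B ∈ P → A ∈ P ∨ B ∈ P)

/-- A binary relation `r` on the power set of `X` is a *primal-proximity* with
respect to a primal `P` on `X`. -/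
def IsPrimalProximity {X : Type*} (P : Set (Set X)) (r : Set X → Set X → Prop) : Prop :=
  (∀ A B : Set X, r A B → r B A) ∧
  (∀ A B C : Set X, r A (B ∪ C) ↔ (r A B ∨ r A C)) ∧
  (∀ A : Set X, Aᶜ ∉ P → ∀ B : Set X, ¬ r A B) ∧
  (∀ A B : Set X, (A ∩ B)ᶜ ∈ P → r A B) ∧
  (∀ A B : Set X, ¬ r A B →
    ∃ C D : Set X, ¬ r A Cᶜ ∧ ¬ r Dᶜ B ∧ (C ∩ D)ᶜ ∉ P)

/-- The point-primal proximity of `A`: `A^↪ = {x | {x} ↪ A}`. -/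
def ppp {X : Type*} (r : Set X → Set X → Prop) (A : Set X) : Set X :=
  {x : X | r {x} A}

theorem stmt_19 {X : Type*} [Nonempty X] (P : Set (Set X)) (r : Set X → Set X → Prop)
    (hP : IsPrimalOn P) (hr : IsPrimalProximity P r)
    (A B H : Set X) (hAB : A ⊆ B) (h1 : r A B) (h2 : ∀ b ∈ B, r {b} H) :
    r A H := by
  obtain ⟨hsym, hunion, hax3, hax4, hax5⟩ := hr
  -- monotonicity in the second argument
  have mono : ∀ E F G : Set X, r E F → F ⊆ G → r E G := by
    intro E F G hEF hFG
    have : r E (F ∪ G) := (hunion E F G).mpr (Or.inl hEF)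
    rwa [Set.union_eq_self_of_subset_left hFG] at this
  by_contra hnr
  obtain ⟨C, D, hAC, hDH, hCD⟩ := hax5 A H hnr
  -- B ⊆ D
  have hBD : B ⊆ D := by
    intro b hb
    by_contra hbD
    have hb' : b ∈ Dᶜ := hbD
    have : r Dᶜ H := by
      have : r H {b} := hsym _ _ (h2 b hb)
      exact hsym _ _ (mono H {b} Dᶜ this (Set.singleton_subset_iff.mpr hb'))
    exact hDH this
  -- r A D
  have hAD : r A D := mono A B D h1 hBD
  -- split D = (D ∩ C) ∪ (D ∩ Cᶜ)
  have hsplit : D = (D ∩ C) ∪ (D ∩ Cᶜ) := by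
    rw [← Set.inter_union_distrib_left, Set.union_compl_self, Set.inter_univ]
  rw [hsplit] at hAD
  rcases (hunion A _ _).mp hAD with h | h
  · have : (D ∩ C)ᶜ ∉ P := by
      rwa [Set.inter_comm] at hCD
    exact hax3 (D ∩ C) this A (hsym _ _ h)
  · exact hAC (mono A (D ∩ Cᶜ) Cᶜ h (Set.inter_subset_right))
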